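/- The one-sided limit lim_{r→0⁺} (1/r) · ∫_{(0,1)²} 1_{{|y(x)| < r}} ( |∂₁y(x)| + |∂₂y(x)| ) dx exists and equals 4. -/

import Mathlib

open Real MeasureTheory Filter Set

/-- `y(x₁,x₂) = sin(π x₁) sin(π x₂)`. -/
noncomputable def ybar (x : ℝ × ℝ) : ℝ := Real.sin (π * x.1) * Real.sin (π * x.2)

/-- `∂₁ y (x₁,x₂) = π cos(π x₁) sin(π x₂)`. -/
noncomputable def d1y (x : ℝ × ℝ) : ℝ := π * Real.cos (π * x.1) * Real.sin (π * x.2)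

/-- `∂₂ y (x₁,x₂) = π sin(π x₁) cos(π x₂)`. -/
noncomputable def d2y (x : ℝ × ℝ) : ℝ := π * Real.sin (π * x.1) * Real.cos (π * x.2)


lemma key_cos (a b : ℝ) : ∫ t in a..b, π * Real.cos (π*t) = Real.sin (π*b) - Real.sin (π*a) := by
  have hd : ∀ x ∈ Set.uIcc a b, HasDerivAt (fun t => Real.sin (π*t)) (π * Real.cos (π*x)) x := by
    intro x _
    have h := (Real.hasDerivAt_sin (π*x)).comp x ((hasDerivAt_id x).const_mul π)
    simp only [Function.comp_def] at h
    exact h.congr_deriv (by ring)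
  exact intervalIntegral.integral_eq_sub_of_hasDerivAt hd
    ((continuous_const.mul (Real.continuous_cos.comp (continuous_const.mul continuous_id))).intervalIntegrable a b)

lemma key_sin (a b : ℝ) : ∫ t in a..b, π * Real.sin (π*t) = Real.cos (π*a) - Real.cos (π*b) := by
  have hd : ∀ x ∈ Set.uIcc a b, HasDerivAt (fun t => -Real.cos (π*t)) (π * Real.sin (π*x)) x := by
    intro x _
    have h := ((Real.hasDerivAt_cos (π*x)).comp x ((hasDerivAt_id x).const_mul π)).neg
    simp only [Function.comp_def] at h
    exact h.congr_deriv (by ring)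
  have := intervalIntegral.integral_eq_sub_of_hasDerivAt hd
    ((continuous_const.mul (Real.continuous_sin.comp (continuous_const.mul continuous_id))).intervalIntegrable a b)
  rw [this]; ring

lemma sin_mono_half {a b : ℝ} (ha : 0 ≤ a) (hab : a ≤ b) (hb : b ≤ 1/2) :
    Real.sin (π*a) ≤ Real.sin (π*b) := by
  apply Real.strictMonoOn_sin.monotoneOn
  · constructor <;> nlinarith [Real.pi_pos]
  · constructor <;> nlinarith [Real.pi_pos]
  · nlinarith [Real.pi_pos]

lemma sin_smono_half {a b : ℝ} (ha : 0 ≤ a) (hab : a < b) (hb : b ≤ 1/2) :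
    Real.sin (π*a) < Real.sin (π*b) := by
  apply Real.strictMonoOn_sin
  · constructor <;> nlinarith [Real.pi_pos]
  · constructor <;> nlinarith [Real.pi_pos]
  · nlinarith [Real.pi_pos]

lemma inner_int (r s : ℝ) (hr : 0 < r) (hs0 : 0 < s) (hs1 : s ≤ 1) :
    (∫ t in Set.Ioo (0:ℝ) 1,
      (if s * Real.sin (π * t) < r then π * |Real.cos (π * t)| * s else 0))
    = 2 * min s r := by
  set g : ℝ → ℝ := fun t => if s * Real.sin (π * t) < r then π * |Real.cos (π * t)| * s else 0 with hg
  set m : ℝ := min s r with hm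
  have hm0 : 0 < m := lt_min hs0 hr
  have hms : m ≤ s := min_le_left _ _
  have hmr : m ≤ r := min_le_right _ _
  have hms1 : m / s ≤ 1 := by rw [div_le_one hs0]; exact hms
  have hms0 : 0 ≤ m / s := le_of_lt (div_pos hm0 hs0)
  set α : ℝ := Real.arcsin (m/s) / π with hα
  have hπ := Real.pi_pos
  have hα0 : 0 < α := div_pos (Real.arcsin_pos.2 (div_pos hm0 hs0)) hπ
  have hα2 : α ≤ 1/2 := by
    rw [hα, div_le_div_iff₀ hπ two_pos]
    have := Real.arcsin_le_pi_div_two (m/s)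
    nlinarith
  have hsin : Real.sin (π * α) = m / s := by
    rw [hα, mul_div_cancel₀ _ (ne_of_gt hπ)]
    exact Real.sin_arcsin (by linarith) hms1
  -- measurability and integrability of g
  have hgm : Measurable g := by
    apply Measurable.ite _ (by fun_prop) measurable_const
    exact measurableSet_lt (by fun_prop) measurable_const
  have hgi : ∀ a b : ℝ, IntervalIntegrable g volume a b := by
    intro a b
    rw [intervalIntegrable_iff]
    apply Integrable.mono' (g := fun _ => π * s) (integrableOn_const measure_Ioc_lt_top.ne)
      hgm.aestronglyMeasurable.restrict
    filter_upwards with t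
    rw [hg]
    by_cases h : s * Real.sin (π * t) < r <;> simp [h, abs_of_nonneg hs0.le, abs_of_pos hπ]
    · nlinarith [Real.abs_cos_le_one (π*t), mul_pos hπ hs0, abs_nonneg (Real.cos (π*t))]
    · positivity
  -- convert to interval integral and split
  rw [← MeasureTheory.integral_Ioc_eq_integral_Ioo, ← intervalIntegral.integral_of_le zero_le_one]
  have hsplit : (∫ t in (0:ℝ)..1, g t) =
      (∫ t in (0:ℝ)..α, g t) + (∫ t in α..(1-α), g t) + (∫ t in (1-α)..1, g t) := by
    rw [intervalIntegral.integral_add_adjacent_intervals (hgi 0 α) (hgi α (1-α)),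
      intervalIntegral.integral_add_adjacent_intervals (hgi 0 (1-α)) (hgi (1-α) 1)]
  rw [hsplit]
  -- first piece
  have hae : ∀ᵐ x : ℝ, x ≠ α := by
    rw [ae_iff]
    simpa using Real.volume_singleton (x := α)
  have h1 : (∫ t in (0:ℝ)..α, g t) = m := by
    have : (∫ t in (0:ℝ)..α, g t) = ∫ t in (0:ℝ)..α, π * Real.cos (π*t) * s := by
      apply intervalIntegral.integral_congr_ae
      filter_upwards [hae] with t hne ht
      rw [Set.uIoc_of_le (le_of_lt hα0)] at ht
      have ht0 : 0 < t := ht.1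
      have htα : t < α := lt_of_le_of_ne ht.2 hne
      have hcond : s * Real.sin (π*t) < r := by
        have := sin_smono_half (le_of_lt ht0) htα hα2
        rw [hsin] at this
        calc s * Real.sin (π*t) < s * (m/s) := by nlinarith
        _ = m := by field_simp
        _ ≤ r := hmr
      have hcos : |Real.cos (π*t)| = Real.cos (π*t) := by
        rw [abs_of_nonneg]
        apply Real.cos_nonneg_of_mem_Icc
        constructor <;> nlinarith
      rw [hg]; simp only [if_pos hcond, hcos]
    rw [this]
    have : (∫ t in (0:ℝ)..α, π * Real.cos (π*t) * s) = (∫ t in (0:ℝ)..α, π * Real.cos (π*t)) * s := by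
      rw [← intervalIntegral.integral_mul_const]
    rw [this, key_cos, hsin]
    simp
    field_simp
  -- third piece
  have h3 : (∫ t in (1-α)..1, g t) = m := by
    have : (∫ t in (1-α)..(1:ℝ), g t) = ∫ t in (1-α)..(1:ℝ), π * (-Real.cos (π*t)) * s := by
      apply intervalIntegral.integral_congr_ae
      filter_upwards with t ht
      rw [Set.uIoc_of_le (by linarith)] at ht
      have ht1 : 1 - α < t := ht.1
      have ht2 : t ≤ 1 := ht.2
      have hsint : Real.sin (π*t) = Real.sin (π*(1-t)) := by
        rw [show π*t = π - π*(1-t) by ring, Real.sin_pi_sub]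
      have hcond : s * Real.sin (π*t) < r := by
        have hlt : Real.sin (π*(1-t)) < Real.sin (π*α) := by
          apply sin_smono_half (by linarith) (by linarith) hα2
        rw [hsint, hsin] at *
        calc s * Real.sin (π*(1-t)) < s * (m/s) := by nlinarith [hlt]
        _ = m := by field_simp
        _ ≤ r := hmr
      have hcos : |Real.cos (π*t)| = -Real.cos (π*t) := by
        rw [abs_of_nonpos]
        apply Real.cos_nonpos_of_pi_div_two_le_of_le <;> nlinarith
      rw [hg]; simp only [if_pos hcond, hcos]
    rw [this]
    have heq : (∫ t in (1-α)..(1:ℝ), π * (-Real.cos (π*t)) * s)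
        = -((∫ t in (1-α)..(1:ℝ), π * Real.cos (π*t)) * s) := by
      rw [← intervalIntegral.integral_mul_const, ← intervalIntegral.integral_neg]
      congr 1; funext t; ring
    rw [heq, key_cos]
    have h1α : Real.sin (π*(1-α)) = m/s := by
      rw [show π*(1-α) = π - π*α by ring, Real.sin_pi_sub, hsin]
    rw [show π*(1:ℝ) = π by ring, Real.sin_pi, h1α]
    field_simp
    ring
  -- middle piece
  have h2 : (∫ t in α..(1-α), g t) = 0 := by
    rcases le_or_gt r s with hrs | hrs
    · have : (∫ t in α..(1-α), g t) = ∫ t in α..(1-α), (0:ℝ) := by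
        apply intervalIntegral.integral_congr
        intro t ht
        rw [Set.uIcc_of_le (by linarith)] at ht
        have hge : Real.sin (π*α) ≤ Real.sin (π*t) := by
          rcases le_or_gt t (1/2) with h | h
          · exact sin_mono_half (le_of_lt hα0) ht.1 h
          · have : Real.sin (π*t) = Real.sin (π*(1-t)) := by
              rw [show π*t = π - π*(1-t) by ring, Real.sin_pi_sub]
            rw [this]
            exact sin_mono_half (le_of_lt hα0) (by linarith [ht.2]) (by linarith)
        have hcond : ¬ (s * Real.sin (π*t) < r) := by
          push_neg
          rw [hsin] at hge
          have hmr' : m = r := by rw [hm, min_eq_right hrs]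
          calc r = m := hmr'.symm
          _ = s * (m/s) := by field_simp
          _ ≤ s * Real.sin (π*t) := by nlinarith
        rw [hg]; simp only [if_neg hcond]
      rw [this]; simp
    · have hα12 : α = 1/2 := by
        have : m = s := by rw [hm, min_eq_left (le_of_lt hrs)]
        rw [hα, this, div_self (ne_of_gt hs0), Real.arcsin_one]
        field_simp
      rw [hα12]
      norm_num
  rw [h1, h2, h3]; ring

lemma outer_int (r : ℝ) (hr0 : 0 < r) (hr1 : r < 1) :
    (∫ t in Set.Ioo (0:ℝ) 1, 2 * min (Real.sin (π*t)) r)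
    = 4*(1 - Real.sqrt (1-r^2))/π + 2*r - (4/π)*r*Real.arcsin r := by
  have hπ := Real.pi_pos
  set β : ℝ := Real.arcsin r / π with hβ
  have hβ0 : 0 < β := div_pos (Real.arcsin_pos.2 hr0) hπ
  have hβ2 : β ≤ 1/2 := by
    rw [hβ, div_le_div_iff₀ hπ two_pos]
    have := Real.arcsin_le_pi_div_two r
    nlinarith
  have hsinβ : Real.sin (π * β) = r := by
    rw [hβ, mul_div_cancel₀ _ (ne_of_gt hπ)]
    exact Real.sin_arcsin (by linarith) (le_of_lt hr1)
  have hcosβ : Real.cos (π * β) = Real.sqrt (1 - r^2) := by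
    rw [hβ, mul_div_cancel₀ _ (ne_of_gt hπ), Real.cos_arcsin]
  have hci : ∀ a b : ℝ, IntervalIntegrable (fun t => 2 * min (Real.sin (π*t)) r) volume a b := by
    intro a b
    exact (continuous_const.mul ((Real.continuous_sin.comp (continuous_const.mul continuous_id)).min
      continuous_const)).intervalIntegrable a b
  rw [← MeasureTheory.integral_Ioc_eq_integral_Ioo, ← intervalIntegral.integral_of_le zero_le_one]
  have hsplit : (∫ t in (0:ℝ)..1, 2 * min (Real.sin (π*t)) r) =
      (∫ t in (0:ℝ)..β, 2 * min (Real.sin (π*t)) r) + (∫ t in β..(1-β), 2 * min (Real.sin (π*t)) r)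
        + (∫ t in (1-β)..1, 2 * min (Real.sin (π*t)) r) := by
    rw [intervalIntegral.integral_add_adjacent_intervals (hci 0 β) (hci β (1-β)),
      intervalIntegral.integral_add_adjacent_intervals (hci 0 (1-β)) (hci (1-β) 1)]
  rw [hsplit]
  have hsin2 : ∀ a b : ℝ, (∫ t in a..b, 2 * Real.sin (π*t)) = (2/π) * (Real.cos (π*a) - Real.cos (π*b)) := by
    intro a b
    rw [← key_sin a b, ← intervalIntegral.integral_const_mul]
    congr 1; funext t; field_simp
  have h1 : (∫ t in (0:ℝ)..β, 2 * min (Real.sin (π*t)) r) = (2/π) * (1 - Real.sqrt (1-r^2)) := by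
    rw [show (∫ t in (0:ℝ)..β, 2 * min (Real.sin (π*t)) r) = ∫ t in (0:ℝ)..β, 2 * Real.sin (π*t) from ?_,
      hsin2, hcosβ]
    · norm_num
    · apply intervalIntegral.integral_congr
      intro t ht
      rw [Set.uIcc_of_le (le_of_lt hβ0)] at ht
      have : Real.sin (π*t) ≤ r := by
        rw [← hsinβ]; exact sin_mono_half ht.1 ht.2 hβ2
      simp only [min_eq_left this]
  have h3 : (∫ t in (1-β)..1, 2 * min (Real.sin (π*t)) r) = (2/π) * (1 - Real.sqrt (1-r^2)) := by
    rw [show (∫ t in (1-β)..1, 2 * min (Real.sin (π*t)) r) = ∫ t in (1-β)..1, 2 * Real.sin (π*t) from ?_,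
      hsin2]
    · rw [show π*(1-β) = π - π*β by ring, Real.cos_pi_sub, hcosβ, show π*(1:ℝ) = π by ring, Real.cos_pi]
      ring
    · apply intervalIntegral.integral_congr
      intro t ht
      rw [Set.uIcc_of_le (by linarith)] at ht
      have : Real.sin (π*t) ≤ r := by
        rw [show π*t = π - π*(1-t) by ring, Real.sin_pi_sub, ← hsinβ]
        exact sin_mono_half (by linarith [ht.2]) (by linarith [ht.1]) hβ2
      simp only [min_eq_left this]
  have h2 : (∫ t in β..(1-β), 2 * min (Real.sin (π*t)) r) = 2*r*(1-2*β) := by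
    rw [show (∫ t in β..(1-β), 2 * min (Real.sin (π*t)) r) = ∫ t in β..(1-β), (2*r : ℝ) from ?_]
    · rw [intervalIntegral.integral_const]; simp; ring
    · apply intervalIntegral.integral_congr
      intro t ht
      rw [Set.uIcc_of_le (by linarith)] at ht
      have : r ≤ Real.sin (π*t) := by
        rw [← hsinβ]
        rcases le_or_gt t (1/2) with h | h
        · exact sin_mono_half (le_of_lt hβ0) ht.1 h
        · rw [show π*t = π - π*(1-t) by ring, Real.sin_pi_sub]
          exact sin_mono_half (le_of_lt hβ0) (by linarith [ht.2]) (by linarith)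
      simp only [min_eq_right this]
  rw [h1, h2, h3, hβ]
  field_simp
  ring

noncomputable def hfun (r a b : ℝ) : ℝ :=
  if Real.sin (π*a) * Real.sin (π*b) < r then π * |Real.cos (π*b)| * Real.sin (π*a) else 0

lemma bdd_intOn {f : ℝ×ℝ → ℝ} (hm : Measurable f) (hb : ∀ z, |f z| ≤ π) :
    IntegrableOn f (Set.Ioo (0:ℝ) 1 ×ˢ Set.Ioo (0:ℝ) 1) volume := by
  have hμ : volume (Set.Ioo (0:ℝ) 1 ×ˢ Set.Ioo (0:ℝ) 1) < ⊤ := by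
    rw [MeasureTheory.Measure.volume_eq_prod, MeasureTheory.Measure.prod_prod, Real.volume_Ioo]
    norm_num
  apply Integrable.mono' (g := fun _ => π) (integrableOn_const hμ.ne)
    hm.aestronglyMeasurable.restrict
  filter_upwards with z using (by simpa using hb z)

lemma hfun_meas (r : ℝ) : Measurable (fun z : ℝ×ℝ => hfun r z.1 z.2) := by
  unfold hfun
  exact Measurable.ite (measurableSet_lt (by fun_prop) measurable_const) (by fun_prop) measurable_const

lemma hfun_meas' (r : ℝ) : Measurable (fun z : ℝ×ℝ => hfun r z.2 z.1) := by
  unfold hfun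
  exact Measurable.ite (measurableSet_lt (by fun_prop) measurable_const) (by fun_prop) measurable_const

lemma hfun_bdd (r a b : ℝ) : |hfun r a b| ≤ π := by
  have hπ := Real.pi_pos
  unfold hfun
  split
  · rw [abs_mul, abs_mul, abs_of_pos hπ, abs_abs]
    have h12 : |Real.cos (π*b)| * |Real.sin (π*a)| ≤ 1 :=
      mul_le_one₀ (Real.abs_cos_le_one _) (abs_nonneg _) (Real.abs_sin_le_one _)
    nlinarith [h12]
  · simpa using le_of_lt hπ

lemma total_eq (r : ℝ) (hr0 : 0 < r) (hr1 : r < 1) :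
    (∫ x in Set.Ioo (0:ℝ) 1 ×ˢ Set.Ioo (0:ℝ) 1, (if |ybar x| < r then |d1y x| + |d2y x| else 0))
    = 8*(1 - Real.sqrt (1-r^2))/π + 4*r - (8/π)*r*Real.arcsin r := by
  have hπ := Real.pi_pos
  set S := Set.Ioo (0:ℝ) 1 with hS
  have hSm : MeasurableSet (S ×ˢ S) := measurableSet_Ioo.prod measurableSet_Ioo
  have hsinpos : ∀ a : ℝ, a ∈ S → 0 < Real.sin (π*a) := by
    intro a ha
    apply Real.sin_pos_of_pos_of_lt_pi
    · exact mul_pos hπ ha.1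
    · nlinarith [ha.2]
  -- step 1 : rewrite integrand
  have step1 : (∫ x in S ×ˢ S, (if |ybar x| < r then |d1y x| + |d2y x| else 0))
      = ∫ x in S ×ˢ S, (hfun r x.2 x.1 + hfun r x.1 x.2) := by
    apply setIntegral_congr_fun hSm
    intro x hx
    dsimp only
    have h1 := hsinpos x.1 hx.1
    have h2 := hsinpos x.2 hx.2
    have hy : |ybar x| = Real.sin (π*x.2) * Real.sin (π*x.1) := by
      unfold ybar; rw [abs_mul, abs_of_pos h1, abs_of_pos h2]; ring
    have hyc : |ybar x| = Real.sin (π*x.1) * Real.sin (π*x.2) := by rw [hy]; ring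
    have hd1 : |d1y x| = π * |Real.cos (π*x.1)| * Real.sin (π*x.2) := by
      unfold d1y; rw [abs_mul, abs_mul, abs_of_pos hπ, abs_of_pos h2]
    have hd2 : |d2y x| = π * |Real.cos (π*x.2)| * Real.sin (π*x.1) := by
      unfold d2y; rw [abs_mul, abs_mul, abs_of_pos hπ, abs_of_pos h1]; ring
    unfold hfun
    by_cases h : |ybar x| < r
    · rw [if_pos h, if_pos (by rw [← hy]; exact h), if_pos (by rw [← hyc]; exact h), hd1, hd2]
    · rw [if_neg h, if_neg (by rw [← hy]; exact h), if_neg (by rw [← hyc]; exact h)]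
      norm_num
  -- integrability
  have hi1 : IntegrableOn (fun z : ℝ×ℝ => hfun r z.1 z.2) (S ×ˢ S) volume :=
    bdd_intOn (hfun_meas r) (fun z => hfun_bdd r z.1 z.2)
  have hi2 : IntegrableOn (fun z : ℝ×ℝ => hfun r z.2 z.1) (S ×ˢ S) volume :=
    bdd_intOn (hfun_meas' r) (fun z => hfun_bdd r z.2 z.1)
  -- split sum
  have step2 : (∫ x in S ×ˢ S, (hfun r x.2 x.1 + hfun r x.1 x.2))
      = (∫ x in S ×ˢ S, hfun r x.2 x.1) + ∫ x in S ×ˢ S, hfun r x.1 x.2 :=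
    integral_add hi2 hi1
  -- swap
  have step3 : (∫ x in S ×ˢ S, hfun r x.2 x.1) = ∫ x in S ×ˢ S, hfun r x.1 x.2 := by
    rw [MeasureTheory.Measure.volume_eq_prod, ← Measure.prod_restrict]
    exact MeasureTheory.integral_prod_swap (fun z : ℝ×ℝ => hfun r z.1 z.2)
  -- Fubini
  have step4 : (∫ x in S ×ˢ S, hfun r x.1 x.2) = ∫ a in S, ∫ b in S, hfun r a b := by
    rw [MeasureTheory.Measure.volume_eq_prod]
    apply MeasureTheory.setIntegral_prod
    rw [← MeasureTheory.Measure.volume_eq_prod]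
    exact hi1
  -- inner integral
  have step5 : (∫ a in S, ∫ b in S, hfun r a b) = ∫ a in S, 2 * min (Real.sin (π*a)) r := by
    apply setIntegral_congr_fun measurableSet_Ioo
    intro a ha
    exact inner_int r (Real.sin (π*a)) hr0 (hsinpos a ha) (Real.sin_le_one _)
  rw [step1, step2, step3, step4, step5, outer_int r hr0 hr1]
  field_simp
  ring

lemma final_lim : Filter.Tendsto
    (fun r : ℝ => (1/r) * (8*(1 - Real.sqrt (1-r^2))/π + 4*r - (8/π)*r*Real.arcsin r))
    (nhdsWithin (0:ℝ) (Set.Ioi 0)) (nhds 4) := by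
  have hπ := Real.pi_pos
  set G : ℝ → ℝ := fun r => 8/π * (r/(1+Real.sqrt (1-r^2))) + 4 - (8/π)*Real.arcsin r with hG
  have hden : ContinuousAt (fun r:ℝ => 1 + Real.sqrt (1-r^2)) 0 := by fun_prop
  have h1 : ContinuousAt (fun r:ℝ => r / (1+Real.sqrt (1-r^2))) 0 :=
    ContinuousAt.div continuousAt_id hden (by norm_num)
  have hGc : ContinuousAt G 0 :=
    ((continuousAt_const.mul h1).add continuousAt_const).sub
      (continuousAt_const.mul Real.continuous_arcsin.continuousAt)
  have hG0 : G 0 = 4 := by simp [hG]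
  have hGt : Filter.Tendsto G (nhdsWithin (0:ℝ) (Set.Ioi 0)) (nhds 4) := by
    rw [← hG0]
    exact hGc.tendsto.mono_left nhdsWithin_le_nhds
  apply Filter.Tendsto.congr' _ hGt
  filter_upwards [Ioo_mem_nhdsGT_of_mem (by norm_num : (0:ℝ) ∈ Set.Ico 0 1)] with r hr
  have hr0 : (0:ℝ) < r := hr.1
  have hr1 : r < 1 := hr.2
  have hsq : Real.sqrt (1-r^2) ^ 2 = 1 - r^2 := Real.sq_sqrt (by nlinarith)
  have hpos : 0 < 1 + Real.sqrt (1-r^2) := by positivity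
  rw [hG]
  dsimp only
  field_simp
  ring_nf
  nlinarith [hsq, Real.arcsin_le_pi_div_two r]

/-- The one-sided limit
`lim_{r→0⁺} (1/r) ∫_{(0,1)²} 1_{|y|<r} (|∂₁y| + |∂₂y|) dx` exists and equals `4`. -/
theorem stmt4 :
    Filter.Tendsto
      (fun r : ℝ => (1 / r) *
        ∫ x in Set.Ioo (0:ℝ) 1 ×ˢ Set.Ioo (0:ℝ) 1,
          (if |ybar x| < r then |d1y x| + |d2y x| else 0))
      (nhdsWithin (0:ℝ) (Set.Ioi 0)) (nhds 4) := by
  apply Filter.Tendsto.congr' _ final_lim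
  filter_upwards [Ioo_mem_nhdsGT_of_mem (by norm_num : (0:ℝ) ∈ Set.Ico 0 1)] with r hr
  rw [total_eq r hr.1 hr.2]
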